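/- Let f: [0,π]×ℝ → ℝ be measurable in the first variable with |f(z,y)| ≤ h(z)·g(|y|) for a.e. z and all y, where h ∈ L²(0,π) is positive and g: ℝ₊ → ℝ₊ is continuous and increasing. Define F(x)(z) = −x(z)x'(z) + f(z,x(z)) for x ∈ H¹₀(0,π). Then F(x) ∈ L²(0,π) and ‖F(x)‖_{L²(0,π)} ≤ √(2π)·‖x‖²_{1/2} + √2·‖h‖_{L²}·g(√π·‖x‖_{1/2}). -/

import Mathlib

open MeasureTheory Set

private lemma my_sqrt_add_le (a b : ℝ) (ha : 0 ≤ a) (hb : 0 ≤ b) :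
    Real.sqrt (a + b) ≤ Real.sqrt a + Real.sqrt b := by
  have key : a + b ≤ (Real.sqrt a + Real.sqrt b)^2 := by
    have h1 := Real.sq_sqrt ha
    have h2 := Real.sq_sqrt hb
    nlinarith [mul_nonneg (Real.sqrt_nonneg a) (Real.sqrt_nonneg b)]
  calc Real.sqrt (a+b) ≤ Real.sqrt ((Real.sqrt a + Real.sqrt b)^2) := Real.sqrt_le_sqrt key
    _ = Real.sqrt a + Real.sqrt b := Real.sqrt_sq (by positivity)

theorem stmt2 (f : ℝ → ℝ → ℝ) (h g : ℝ → ℝ) (x x' : ℝ → ℝ)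
    (hfmeas : ∀ y : ℝ, Measurable (fun z => f z y))
    (hbound : ∀ᵐ z ∂(volume.restrict (Ioo 0 Real.pi)), ∀ y : ℝ, |f z y| ≤ h z * g |y|)
    (hh : MemLp h 2 (volume.restrict (Ioo 0 Real.pi)))
    (hhpos : ∀ z, 0 < h z)
    (hgcont : Continuous g) (hgmono : Monotone g) (hgpos : ∀ r, 0 < g r)
    (hx0 : x 0 = 0) (hxpi : x Real.pi = 0)
    (hd : ∀ z ∈ Icc (0:ℝ) Real.pi, HasDerivAt x (x' z) z)
    (hsq : IntervalIntegrable (fun z => (x' z)^2) volume 0 Real.pi)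
    (hFmeas : AEStronglyMeasurable (fun z => -(x z * x' z) + f z (x z))
        (volume.restrict (Ioo 0 Real.pi))) :
    MemLp (fun z => -(x z * x' z) + f z (x z)) 2 (volume.restrict (Ioo 0 Real.pi)) ∧
    Real.sqrt (∫ z in (0:ℝ)..Real.pi, (-(x z * x' z) + f z (x z))^2)
      ≤ Real.sqrt (2*Real.pi) * (Real.sqrt (∫ z in (0:ℝ)..Real.pi, (x' z)^2))^2
        + Real.sqrt 2 * Real.sqrt (∫ z in (0:ℝ)..Real.pi, (h z)^2)
          * g (Real.sqrt Real.pi * Real.sqrt (∫ z in (0:ℝ)..Real.pi, (x' z)^2)) := by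
  have hpi : (0:ℝ) ≤ Real.pi := Real.pi_pos.le
  set I := ∫ z in (0:ℝ)..Real.pi, (x' z)^2 with hIdef
  have hI0 : 0 ≤ I := intervalIntegral.integral_nonneg hpi (fun t _ => sq_nonneg _)
  set M := Real.sqrt Real.pi * Real.sqrt I with hMdef
  have hM0 : 0 ≤ M := mul_nonneg (Real.sqrt_nonneg _) (Real.sqrt_nonneg _)
  have hM2 : M ^ 2 = Real.pi * I := by
    rw [hMdef, mul_pow, Real.sq_sqrt hpi, Real.sq_sqrt hI0]
  -- a.e. equality of x' with deriv x on subintervals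
  have haed : ∀ z ∈ Icc (0:ℝ) Real.pi,
      x' =ᵐ[volume.restrict (Ioc 0 z)] deriv x := by
    intro z hz
    have hnull : (volume.restrict (Ioc 0 z)) ((Ioo 0 Real.pi)ᶜ) = 0 := by
      rw [Measure.restrict_apply measurableSet_Ioo.compl]
      refine measure_mono_null (fun t ht => ?_) (measure_singleton Real.pi)
      simp only [mem_compl_iff, mem_Ioo, mem_inter_iff, mem_Ioc] at ht
      rcases ht with ⟨hnot, ht1, ht2⟩
      simp only [mem_singleton_iff]
      push_neg at hnot
      have h3 := hnot ht1
      have h4 := hz.2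
      linarith
    have h1 : ∀ᵐ t ∂volume.restrict (Ioc 0 z), t ∈ Ioo 0 Real.pi := by
      rw [Filter.eventually_iff, mem_ae_iff]
      exact hnull
    filter_upwards [h1] with t ht
    exact ((hd t (Ioo_subset_Icc_self ht)).deriv).symm
  have hx'meas : ∀ z ∈ Icc (0:ℝ) Real.pi,
      AEStronglyMeasurable x' (volume.restrict (Ioc 0 z)) := fun z hz =>
    ((measurable_deriv x).aestronglyMeasurable).congr (haed z hz).symm
  -- integrability of x'^2 on subintervals
  have hint2 : ∀ z ∈ Icc (0:ℝ) Real.pi,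
      IntegrableOn (fun t => (x' t)^2) (Ioc 0 z) := by
    intro z hz
    have := hsq.mono_set (by rw [uIcc_of_le hz.1, uIcc_of_le hpi]; exact Icc_subset_Icc le_rfl hz.2)
    exact (intervalIntegrable_iff_integrableOn_Ioc_of_le hz.1).mp this
  -- integrability of x' on subintervals
  have hintx' : ∀ z ∈ Icc (0:ℝ) Real.pi, IntegrableOn x' (Ioc 0 z) := by
    intro z hz
    have hc : IntegrableOn (fun _ : ℝ => (1:ℝ)) (Ioc 0 z) volume :=
      integrableOn_const measure_Ioc_lt_top.ne
    have hdom : IntegrableOn (fun t => 1 + (x' t)^2) (Ioc 0 z) volume := hc.add (hint2 z hz)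
    refine Integrable.mono' hdom (hx'meas z hz) ?_
    refine Filter.Eventually.of_forall fun t => ?_
    have : |x' t| ≤ 1 + (x' t)^2 := by nlinarith [sq_nonneg (|x' t| - 1), sq_abs (x' t)]
    simpa using this
  -- FTC
  have hftc : ∀ z ∈ Icc (0:ℝ) Real.pi, x z = ∫ t in (0:ℝ)..z, x' t := by
    intro z hz
    have := intervalIntegral.integral_eq_sub_of_hasDerivAt
      (f := x) (f' := x') (a := 0) (b := z)
      (fun t ht => hd t (by rw [uIcc_of_le hz.1] at ht; exact ⟨ht.1, ht.2.trans hz.2⟩))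
      ((intervalIntegrable_iff_integrableOn_Ioc_of_le hz.1).mpr (hintx' z hz))
    rw [hx0, sub_zero] at this
    exact this.symm
  -- sup bound
  have hsup : ∀ z ∈ Icc (0:ℝ) Real.pi, |x z| ≤ M := by
    intro z hz
    rw [hftc z hz]
    calc |∫ t in (0:ℝ)..z, x' t| ≤ ∫ t in (0:ℝ)..z, |x' t| :=
          intervalIntegral.abs_integral_le_integral_abs hz.1
      _ = ∫ t in Ioc 0 z, |x' t| := intervalIntegral.integral_of_le hz.1
      _ ≤ M := by
        haveI : IsFiniteMeasure (volume.restrict (Ioc (0:ℝ) z)) :=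
          ⟨by rw [Measure.restrict_apply_univ]; exact measure_Ioc_lt_top⟩
        have hconj : Real.HolderConjugate 2 2 := Real.HolderConjugate.two_two
        have hmg : MemLp (fun t => |x' t|) (ENNReal.ofReal 2) (volume.restrict (Ioc 0 z)) := by
          rw [show ENNReal.ofReal 2 = 2 by norm_num]
          refine (memLp_two_iff_integrable_sq (by simpa [Real.norm_eq_abs] using (hx'meas z hz).norm)).2 ?_
          exact ((hint2 z hz).congr_fun (fun t _ => (sq_abs (x' t)).symm) measurableSet_Ioc)
        have hm1 : MemLp (fun _ : ℝ => (1:ℝ)) (ENNReal.ofReal 2) (volume.restrict (Ioc 0 z)) := by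
          rw [show ENNReal.ofReal 2 = 2 by norm_num]; exact memLp_const 1
        have hCS := MeasureTheory.integral_mul_le_Lp_mul_Lq_of_nonneg hconj
          (μ := volume.restrict (Ioc 0 z))
          (f := fun _ => (1:ℝ)) (g := fun t => |x' t|)
          (Filter.Eventually.of_forall fun _ => zero_le_one)
          (Filter.Eventually.of_forall fun t => abs_nonneg _) hm1 hmg
        simp only [Real.one_rpow, one_mul] at hCS
        have hvol : ∫ _t in Ioc (0:ℝ) z, (1:ℝ) = z := by
          simp [Measure.restrict_apply_univ, Real.volume_Ioc, ENNReal.toReal_ofReal hz.1, hz.1]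
        have habs2 : ∫ t in Ioc (0:ℝ) z, |x' t| ^ (2:ℝ) = ∫ t in Ioc 0 z, (x' t)^2 := by
          refine integral_congr_ae (Filter.Eventually.of_forall fun t => ?_)
          show |x' t| ^ (2:ℝ) = x' t ^ 2
          rw [show ((2:ℝ)) = ((2:ℕ):ℝ) by norm_num, Real.rpow_natCast, sq_abs]
        have hIle : ∫ t in Ioc (0:ℝ) z, (x' t)^2 ≤ I := by
          rw [hIdef, intervalIntegral.integral_of_le hpi]
          refine setIntegral_mono_set (hint2 Real.pi ⟨hpi, le_rfl⟩)
            (Filter.Eventually.of_forall fun t => sq_nonneg _)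
            (HasSubset.Subset.eventuallyLE (Ioc_subset_Ioc le_rfl hz.2))
        have hiznn : 0 ≤ ∫ t in Ioc (0:ℝ) z, (x' t)^2 :=
          setIntegral_nonneg measurableSet_Ioc fun t _ => sq_nonneg _
        rw [hvol, habs2] at hCS
        calc ∫ t in Ioc (0:ℝ) z, |x' t|
            ≤ z ^ (1/(2:ℝ)) * (∫ t in Ioc (0:ℝ) z, (x' t)^2) ^ (1/(2:ℝ)) := hCS
          _ = Real.sqrt z * Real.sqrt (∫ t in Ioc (0:ℝ) z, (x' t)^2) := by
              rw [Real.sqrt_eq_rpow, Real.sqrt_eq_rpow]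
          _ ≤ M := by
              exact mul_le_mul (Real.sqrt_le_sqrt hz.2) (Real.sqrt_le_sqrt hIle)
                (Real.sqrt_nonneg _) (Real.sqrt_nonneg _)
  -- pointwise a.e. bound on F^2
  set F := fun z => -(x z * x' z) + f z (x z) with hFdef
  have hFb : ∀ᵐ z ∂(volume.restrict (Ioo 0 Real.pi)),
      (F z)^2 ≤ 2 * M^2 * (x' z)^2 + 2 * (g M)^2 * (h z)^2 := by
    filter_upwards [hbound, ae_restrict_mem measurableSet_Ioo] with z hb hz
    have hxz : |x z| ≤ M := hsup z (Ioo_subset_Icc_self hz)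
    have hf1 : |f z (x z)| ≤ h z * g M := by
      refine (hb (x z)).trans ?_
      exact mul_le_mul_of_nonneg_left (hgmono hxz) (hhpos z).le
    have hx2 : (x z)^2 ≤ M^2 := by nlinarith [sq_abs (x z), abs_nonneg (x z)]
    have hf2 : (f z (x z))^2 ≤ (h z * g M)^2 := by
      nlinarith [sq_abs (f z (x z)), abs_nonneg (f z (x z)), mul_nonneg (hhpos z).le (hgpos M).le]
    have : (F z)^2 ≤ 2 * (x z * x' z)^2 + 2 * (f z (x z))^2 := by
      show (-(x z * x' z) + f z (x z))^2 ≤ _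
      nlinarith [sq_nonneg (x z * x' z + f z (x z))]
    refine this.trans ?_
    have : (x z * x' z)^2 ≤ M^2 * (x' z)^2 := by
      rw [mul_pow]; exact mul_le_mul_of_nonneg_right hx2 (sq_nonneg _)
    nlinarith [this, hf2, sq_nonneg (x' z)]
  -- integrable dominating function
  have hx'2oo : IntegrableOn (fun t => (x' t)^2) (Ioo 0 Real.pi) :=
    (hint2 Real.pi ⟨hpi, le_rfl⟩).mono_set Ioo_subset_Ioc_self
  have hh2 : Integrable (fun z => (h z)^2) (volume.restrict (Ioo 0 Real.pi)) := by
    have := hh.integrable_sq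
    simpa using this
  have hG : Integrable (fun z => 2 * M^2 * (x' z)^2 + 2 * (g M)^2 * (h z)^2)
      (volume.restrict (Ioo 0 Real.pi)) :=
    (hx'2oo.const_mul _).add (hh2.const_mul _)
  have hF2int : Integrable (fun z => (F z)^2) (volume.restrict (Ioo 0 Real.pi)) := by
    refine Integrable.mono' hG (hFmeas.pow 2) ?_
    filter_upwards [hFb] with z hz
    rw [Real.norm_eq_abs, abs_of_nonneg (sq_nonneg _)]
    exact hz
  have hmem : MemLp F 2 (volume.restrict (Ioo 0 Real.pi)) :=
    (memLp_two_iff_integrable_sq hFmeas).2 hF2int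
  refine ⟨hmem, ?_⟩
  set H := ∫ z in (0:ℝ)..Real.pi, (h z)^2 with hHdef
  have hH0 : 0 ≤ H := intervalIntegral.integral_nonneg hpi (fun t _ => sq_nonneg _)
  have hHoo : H = ∫ z in Ioo (0:ℝ) Real.pi, (h z)^2 := by
    rw [hHdef, intervalIntegral.integral_of_le hpi, integral_Ioc_eq_integral_Ioo]
  have hIoo : I = ∫ z in Ioo (0:ℝ) Real.pi, (x' z)^2 := by
    rw [hIdef, intervalIntegral.integral_of_le hpi, integral_Ioc_eq_integral_Ioo]
  have hmain : ∫ z in (0:ℝ)..Real.pi, (F z)^2 ≤ 2 * Real.pi * (I*I) + 2 * (g M)^2 * H := by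
    rw [intervalIntegral.integral_of_le hpi, integral_Ioc_eq_integral_Ioo]
    calc ∫ z in Ioo (0:ℝ) Real.pi, (F z)^2
        ≤ ∫ z in Ioo (0:ℝ) Real.pi, (2 * M^2 * (x' z)^2 + 2 * (g M)^2 * (h z)^2) :=
          integral_mono_ae hF2int hG hFb
      _ = 2 * M^2 * (∫ z in Ioo (0:ℝ) Real.pi, (x' z)^2)
          + 2 * (g M)^2 * (∫ z in Ioo (0:ℝ) Real.pi, (h z)^2) := by
          rw [integral_add (hx'2oo.const_mul _) (hh2.const_mul _),
            integral_const_mul, integral_const_mul]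
      _ = 2 * Real.pi * (I*I) + 2 * (g M)^2 * H := by
          rw [← hIoo, ← hHoo, hM2]; ring
  have hintF2nn : 0 ≤ ∫ z in (0:ℝ)..Real.pi, (F z)^2 :=
    intervalIntegral.integral_nonneg hpi (fun t _ => sq_nonneg _)
  calc Real.sqrt (∫ z in (0:ℝ)..Real.pi, (F z)^2)
      ≤ Real.sqrt (2 * Real.pi * (I*I) + 2 * (g M)^2 * H) := Real.sqrt_le_sqrt hmain
    _ ≤ Real.sqrt (2 * Real.pi * (I*I)) + Real.sqrt (2 * (g M)^2 * H) :=
        my_sqrt_add_le _ _ (by positivity) (by positivity)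
    _ = Real.sqrt (2*Real.pi) * I + Real.sqrt 2 * Real.sqrt H * g M := by
        rw [Real.sqrt_mul (by positivity), Real.sqrt_mul_self hI0]
        congr 1
        rw [show 2 * (g M)^2 * H = 2 * (H * (g M)^2) by ring,
          Real.sqrt_mul (by norm_num), Real.sqrt_mul hH0, Real.sqrt_sq (hgpos M).le]
        ring
    _ = Real.sqrt (2*Real.pi) * (Real.sqrt I)^2 + Real.sqrt 2 * Real.sqrt H * g M := by
        rw [Real.sq_sqrt hI0]
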